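/- A priori energy estimate for classical solutions of the coupled drug-release system: let δ, P̃, Pe, Da, K, l, T > 0 and φ ∈ (0,1), and let (c, c₁, c₂) be a classical solution of the coupled drug-release system on [0,T] with initial data c(x,0) = 1 for x ∈ [-l,0] and c₁(x,0) = c₂(x,0) = 0 for x ∈ [0,1]. Set γ := min(φ, 1-φ)/2 and M := Da·(K+1)/(2·K·γ). Then for every t ∈ [0,T]: ∫_{-l}^0 c(x,t)² dx + ∫_0^1 c₁(x,t)² dx + ∫_0^1 c₂(x,t)² dx ≤ (l/(2γ))·e^{M·t}, and moreover δ·∫_0^T ∫_{-l}^0 (∂_x c(x,t))² dx dt + ∫_0^T ∫_0^1 (∂_x c₁(x,t))² dx dt + (Pe/2)·∫_0^T (c₁(0,t)² + c₁(1,t)²) dt ≤ (l/2)·e^{M·T}. -/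

import Mathlib

set_option maxHeartbeats 1000000
open MeasureTheory intervalIntegral Set Function

namespace DrugAux

lemma contOn_sliceX {a b u v : ℝ} {f : ℝ → ℝ → ℝ}
    (hf : ContinuousOn (fun p : ℝ × ℝ => f p.1 p.2) (Icc a b ×ˢ Icc u v))
    {t : ℝ} (ht : t ∈ Icc u v) : ContinuousOn (fun x => f x t) (Icc a b) := by
  have : ContinuousOn ((fun p : ℝ × ℝ => f p.1 p.2) ∘ (fun x => (x, t))) (Icc a b) :=
    hf.comp ((continuous_id.prodMk continuous_const).continuousOn)
      (fun y hy => ⟨hy, ht⟩)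
  exact this

lemma contOn_sliceT {a b u v : ℝ} {f : ℝ → ℝ → ℝ}
    (hf : ContinuousOn (fun p : ℝ × ℝ => f p.1 p.2) (Icc a b ×ˢ Icc u v))
    {x : ℝ} (hx : x ∈ Icc a b) : ContinuousOn (fun t => f x t) (Icc u v) := by
  have : ContinuousOn ((fun p : ℝ × ℝ => f p.1 p.2) ∘ (fun t => (x, t))) (Icc u v) :=
    hf.comp ((continuous_const.prodMk continuous_id).continuousOn)
      (fun s hs => ⟨hx, hs⟩)
  exact this

lemma contOn_param {a b u v : ℝ} (hab : a ≤ b) {f : ℝ → ℝ → ℝ}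
    (hf : ContinuousOn (fun p : ℝ × ℝ => f p.1 p.2) (Icc a b ×ˢ Icc u v)) :
    ContinuousOn (fun t => ∫ x in a..b, f x t) (Icc u v) := by
  obtain ⟨C, hC⟩ := ((isCompact_Icc.prod isCompact_Icc).exists_bound_of_continuousOn hf)
  intro t₀ ht₀
  refine intervalIntegral.continuousWithinAt_of_dominated_interval
    (F := fun t x => f x t) (bound := fun _ => C) (μ := volume) (s := Icc u v)
    ?_ ?_ ?_ ?_
  · filter_upwards [self_mem_nhdsWithin] with t ht
    rw [uIoc_of_le hab]
    exact ((contOn_sliceX hf ht).mono Ioc_subset_Icc_self).aestronglyMeasurable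
      measurableSet_Ioc
  · filter_upwards [self_mem_nhdsWithin] with t ht
    filter_upwards with x hx
    rw [uIoc_of_le hab] at hx
    exact hC (x, t) ⟨Ioc_subset_Icc_self hx, ht⟩
  · exact intervalIntegrable_const
  · filter_upwards with x hx
    rw [uIoc_of_le hab] at hx
    exact (contOn_sliceT hf (Ioc_subset_Icc_self hx)) t₀ ht₀

lemma contOn_param' {a b u v : ℝ} (huv : u ≤ v) {f : ℝ → ℝ → ℝ}
    (hf : ContinuousOn (fun p : ℝ × ℝ => f p.1 p.2) (Icc a b ×ˢ Icc u v)) :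
    ContinuousOn (fun x => ∫ s in u..v, f x s) (Icc a b) := by
  have hsw : ContinuousOn (fun p : ℝ × ℝ => f p.2 p.1) (Icc u v ×ˢ Icc a b) := by
    have : ContinuousOn ((fun p : ℝ × ℝ => f p.1 p.2) ∘ Prod.swap) (Icc u v ×ˢ Icc a b) :=
      hf.comp continuous_swap.continuousOn (fun p hp => ⟨hp.2, hp.1⟩)
    exact this
  exact contOn_param huv hsw

lemma ftc {a b : ℝ} (hab : a ≤ b) {f f' : ℝ → ℝ}
    (hcont : ContinuousOn f (Icc a b))
    (hderiv : ∀ x ∈ Icc a b, HasDerivWithinAt f (f' x) (Icc a b) x)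
    (hcont' : ContinuousOn f' (Icc a b)) :
    ∫ x in a..b, f' x = f b - f a := by
  apply intervalIntegral.integral_eq_sub_of_hasDeriv_right_of_le hab hcont
  · intro x hx
    exact ((hderiv x (Ioo_subset_Icc_self hx)).hasDerivAt
      (Icc_mem_nhds hx.1 hx.2)).hasDerivWithinAt
  · rw [← uIcc_of_le hab] at hcont'
    exact hcont'.intervalIntegrable

lemma swap_box {a b u v : ℝ} (hab : a ≤ b) (huv : u ≤ v) {h : ℝ → ℝ → ℝ}
    (hc : ContinuousOn (fun p : ℝ × ℝ => h p.1 p.2) (Icc a b ×ˢ Icc u v)) :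
    ∫ x in a..b, ∫ s in u..v, h x s = ∫ s in u..v, ∫ x in a..b, h x s := by
  have hint : Integrable (uncurry h)
      ((volume.restrict (Ioc a b)).prod (volume.restrict (Ioc u v))) := by
    rw [Measure.prod_restrict]
    exact (hc.integrableOn_compact (isCompact_Icc.prod isCompact_Icc)).mono_set
      (Set.prod_mono Ioc_subset_Icc_self Ioc_subset_Icc_self)
  simp only [intervalIntegral.integral_of_le hab, intervalIntegral.integral_of_le huv]
  exact MeasureTheory.integral_integral_swap hint

/-- energy representation: `∫ f(·,t)² = ∫ f(·,0)² + ∫₀ᵗ ∫ 2 f fₜ`. -/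
lemma rep {a b T : ℝ} (hab : a ≤ b) {f ft : ℝ → ℝ → ℝ}
    (hf : ContinuousOn (fun p : ℝ × ℝ => f p.1 p.2) (Icc a b ×ˢ Icc 0 T))
    (hft : ContinuousOn (fun p : ℝ × ℝ => ft p.1 p.2) (Icc a b ×ˢ Icc 0 T))
    (hd : ∀ x ∈ Icc a b, ∀ t ∈ Icc 0 T, HasDerivWithinAt (fun s => f x s) (ft x t) (Icc 0 T) t)
    {t : ℝ} (ht : t ∈ Icc 0 T) :
    (∫ x in a..b, (f x t) ^ 2) = (∫ x in a..b, (f x 0) ^ 2)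
      + ∫ s in (0:ℝ)..t, (∫ x in a..b, 2 * (f x s * ft x s)) := by
  have hsub : Icc (0:ℝ) t ⊆ Icc 0 T := Icc_subset_Icc le_rfl ht.2
  have hbox : Icc a b ×ˢ Icc (0:ℝ) t ⊆ Icc a b ×ˢ Icc 0 T :=
    Set.prod_mono subset_rfl hsub
  have hprod : ContinuousOn (fun p : ℝ × ℝ => 2 * (f p.1 p.2 * ft p.1 p.2))
      (Icc a b ×ˢ Icc (0:ℝ) t) :=
    (continuousOn_const.mul ((hf.mono hbox).mul (hft.mono hbox)))
  have key : ∀ x ∈ Icc a b,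
      (f x t) ^ 2 = (f x 0) ^ 2 + ∫ s in (0:ℝ)..t, 2 * (f x s * ft x s) := by
    intro x hx
    have hftc := ftc ht.1 (f := fun s => (f x s) ^ 2)
      (f' := fun s => 2 * (f x s * ft x s))
      (((contOn_sliceT hf hx).mono hsub).pow 2)
      (fun s hs => by
        have := ((hd x hx s (hsub hs)).fun_pow 2).mono hsub
        exact this.congr_deriv (by ring))
      ((continuousOn_const.mul (((contOn_sliceT hf hx).mono hsub).mul
        ((contOn_sliceT hft hx).mono hsub))))
    rw [hftc]; ring
  have hint0 : IntervalIntegrable (fun x => (f x 0) ^ 2) volume a b := by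
    apply ContinuousOn.intervalIntegrable
    rw [uIcc_of_le hab]
    exact (contOn_sliceX hf ⟨le_rfl, le_trans ht.1 ht.2⟩).pow 2
  have hcontinner : ContinuousOn (fun x => ∫ s in (0:ℝ)..t, 2 * (f x s * ft x s))
      (Icc a b) := contOn_param' ht.1 hprod
  have hint1 : IntervalIntegrable (fun x => ∫ s in (0:ℝ)..t, 2 * (f x s * ft x s))
      volume a b := by
    apply ContinuousOn.intervalIntegrable
    rw [uIcc_of_le hab]
    exact hcontinner
  calc ∫ x in a..b, (f x t) ^ 2
      = ∫ x in a..b, ((f x 0) ^ 2 + ∫ s in (0:ℝ)..t, 2 * (f x s * ft x s)) :=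
        intervalIntegral.integral_congr
          (fun x hx => key x (by rwa [uIcc_of_le hab] at hx))
    _ = (∫ x in a..b, (f x 0) ^ 2)
        + ∫ x in a..b, ∫ s in (0:ℝ)..t, 2 * (f x s * ft x s) :=
        intervalIntegral.integral_add hint0 hint1
    _ = (∫ x in a..b, (f x 0) ^ 2)
        + ∫ s in (0:ℝ)..t, ∫ x in a..b, 2 * (f x s * ft x s) := by
        rw [swap_box hab ht.1 hprod]


lemma II {a b u v : ℝ} (hab : a ≤ b) {f : ℝ → ℝ → ℝ}
    (hf : ContinuousOn (fun p : ℝ × ℝ => f p.1 p.2) (Icc a b ×ˢ Icc u v))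
    {t : ℝ} (ht : t ∈ Icc u v) :
    IntervalIntegrable (fun x => f x t) volume a b := by
  apply ContinuousOn.intervalIntegrable
  rw [uIcc_of_le hab]
  exact contOn_sliceX hf ht

/-- integration by parts of `∫ (u'² + u u'')` -/
lemma ibp {a b : ℝ} (hab : a ≤ b) {u u' u'' : ℝ → ℝ}
    (hu : ContinuousOn u (Icc a b)) (hu' : ContinuousOn u' (Icc a b))
    (hu'' : ContinuousOn u'' (Icc a b))
    (hd1 : ∀ x ∈ Icc a b, HasDerivWithinAt u (u' x) (Icc a b) x)
    (hd2 : ∀ x ∈ Icc a b, HasDerivWithinAt u' (u'' x) (Icc a b) x) :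
    ∫ x in a..b, ((u' x) ^ 2 + u x * u'' x) = u b * u' b - u a * u' a :=
  ftc hab (f := fun x => u x * u' x) (hu.mul hu')
    (fun x hx => by
      have := (hd1 x hx).fun_mul (hd2 x hx)
      exact this.congr_deriv (by ring))
    ((hu'.pow 2).add (hu.mul hu''))

lemma ftc_sq {a b : ℝ} (hab : a ≤ b) {u u' : ℝ → ℝ}
    (hu : ContinuousOn u (Icc a b)) (hu' : ContinuousOn u' (Icc a b))
    (hd1 : ∀ x ∈ Icc a b, HasDerivWithinAt u (u' x) (Icc a b) x) :
    ∫ x in a..b, u x * u' x = (u b) ^ 2 / 2 - (u a) ^ 2 / 2 :=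
  ftc hab (f := fun x => (u x) ^ 2 / 2) ((hu.pow 2).div_const 2)
    (fun x hx => by
      have := ((hd1 x hx).fun_pow 2).div_const 2
      exact this.congr_deriv (by ring))
    (hu.mul hu')

end DrugAux
/-- A classical solution of the coupled 1-d drug-release system on `[0,T]`:
`c` (stent concentration on `[-l,0]`), `c₁` (extracellular) and `c₂` (intracellular,
on `[0,1]`), together with their partial derivatives `ct, cx, cxx`, `c₁t, c₁x, c₁xx`,
`c₂t`, all continuous on the respective space-time boxes, satisfying the PDEs,
boundary and interface conditions of the model. -/
structure IsClassicalSolution (δ Pt Pe Da K l T φ : ℝ)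
    (c ct cx cxx c₁ c₁t c₁x c₁xx c₂ c₂t : ℝ → ℝ → ℝ) : Prop where
  cont_c : ContinuousOn (fun p : ℝ × ℝ => c p.1 p.2) (Set.Icc (-l) 0 ×ˢ Set.Icc 0 T)
  cont_ct : ContinuousOn (fun p : ℝ × ℝ => ct p.1 p.2) (Set.Icc (-l) 0 ×ˢ Set.Icc 0 T)
  cont_cx : ContinuousOn (fun p : ℝ × ℝ => cx p.1 p.2) (Set.Icc (-l) 0 ×ˢ Set.Icc 0 T)
  cont_cxx : ContinuousOn (fun p : ℝ × ℝ => cxx p.1 p.2) (Set.Icc (-l) 0 ×ˢ Set.Icc 0 T)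
  cont_c₁ : ContinuousOn (fun p : ℝ × ℝ => c₁ p.1 p.2) (Set.Icc (0 : ℝ) 1 ×ˢ Set.Icc 0 T)
  cont_c₁t : ContinuousOn (fun p : ℝ × ℝ => c₁t p.1 p.2) (Set.Icc (0 : ℝ) 1 ×ˢ Set.Icc 0 T)
  cont_c₁x : ContinuousOn (fun p : ℝ × ℝ => c₁x p.1 p.2) (Set.Icc (0 : ℝ) 1 ×ˢ Set.Icc 0 T)
  cont_c₁xx : ContinuousOn (fun p : ℝ × ℝ => c₁xx p.1 p.2) (Set.Icc (0 : ℝ) 1 ×ˢ Set.Icc 0 T)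
  cont_c₂ : ContinuousOn (fun p : ℝ × ℝ => c₂ p.1 p.2) (Set.Icc (0 : ℝ) 1 ×ˢ Set.Icc 0 T)
  cont_c₂t : ContinuousOn (fun p : ℝ × ℝ => c₂t p.1 p.2) (Set.Icc (0 : ℝ) 1 ×ˢ Set.Icc 0 T)
  hasDeriv_ct : ∀ x ∈ Set.Icc (-l) 0, ∀ t ∈ Set.Icc 0 T,
    HasDerivWithinAt (fun s => c x s) (ct x t) (Set.Icc 0 T) t
  hasDeriv_cx : ∀ x ∈ Set.Icc (-l) 0, ∀ t ∈ Set.Icc 0 T,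
    HasDerivWithinAt (fun y => c y t) (cx x t) (Set.Icc (-l) 0) x
  hasDeriv_cxx : ∀ x ∈ Set.Icc (-l) 0, ∀ t ∈ Set.Icc 0 T,
    HasDerivWithinAt (fun y => cx y t) (cxx x t) (Set.Icc (-l) 0) x
  hasDeriv_c₁t : ∀ x ∈ Set.Icc (0 : ℝ) 1, ∀ t ∈ Set.Icc 0 T,
    HasDerivWithinAt (fun s => c₁ x s) (c₁t x t) (Set.Icc 0 T) t
  hasDeriv_c₁x : ∀ x ∈ Set.Icc (0 : ℝ) 1, ∀ t ∈ Set.Icc 0 T,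
    HasDerivWithinAt (fun y => c₁ y t) (c₁x x t) (Set.Icc (0 : ℝ) 1) x
  hasDeriv_c₁xx : ∀ x ∈ Set.Icc (0 : ℝ) 1, ∀ t ∈ Set.Icc 0 T,
    HasDerivWithinAt (fun y => c₁x y t) (c₁xx x t) (Set.Icc (0 : ℝ) 1) x
  hasDeriv_c₂t : ∀ x ∈ Set.Icc (0 : ℝ) 1, ∀ t ∈ Set.Icc 0 T,
    HasDerivWithinAt (fun s => c₂ x s) (c₂t x t) (Set.Icc 0 T) t
  pde_c : ∀ x ∈ Set.Ioo (-l) 0, ∀ t ∈ Set.Ioc 0 T, ct x t = δ * cxx x t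
  bc_lumen : ∀ t ∈ Set.Ioc 0 T, cx (-l) t = 0
  bc_interface_c : ∀ t ∈ Set.Ioc 0 T, cx 0 t + Pt * c 0 t = Pt * c₁ 0 t
  pde_c₁ : ∀ x ∈ Set.Ioo (0 : ℝ) 1, ∀ t ∈ Set.Ioc 0 T,
    φ * c₁t x t = c₁xx x t - Pe * c₁x x t - Da * c₁ x t + (Da / K) * c₂ x t
  bc_interface_c₁ : ∀ t ∈ Set.Ioc 0 T, c₁x 0 t - Pe * c₁ 0 t = δ * cx 0 t
  bc_adventitia : ∀ t ∈ Set.Ioc 0 T, c₁x 1 t = 0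
  ode_c₂ : ∀ x ∈ Set.Icc (0 : ℝ) 1, ∀ t ∈ Set.Ioc 0 T,
    (1 - φ) * c₂t x t + (Da / K) * c₂ x t = Da * c₁ x t

/-- A priori energy estimate for classical solutions of the coupled drug-release system
with initial data `c ≡ 1`, `c₁ ≡ c₂ ≡ 0`: with `γ := min(φ,1-φ)/2` and
`M := Da(K+1)/(2Kγ)`, for every `t ∈ [0,T]` the total `L²` energy is bounded by
`(l/(2γ))·e^{Mt}`, and the dissipation terms are bounded by `(l/2)·e^{MT}`. -/
theorem coupled_system_apriori_estimate
    (δ Pt Pe Da K l T φ : ℝ)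
    (hδ : 0 < δ) (hPt : 0 < Pt) (hPe : 0 < Pe) (hDa : 0 < Da) (hK : 0 < K)
    (hl : 0 < l) (hT : 0 < T) (hφ : φ ∈ Set.Ioo (0 : ℝ) 1)
    (c ct cx cxx c₁ c₁t c₁x c₁xx c₂ c₂t : ℝ → ℝ → ℝ)
    (hsol : IsClassicalSolution δ Pt Pe Da K l T φ c ct cx cxx c₁ c₁t c₁x c₁xx c₂ c₂t)
    (hic : ∀ x ∈ Set.Icc (-l) 0, c x 0 = 1)
    (hic₁ : ∀ x ∈ Set.Icc (0 : ℝ) 1, c₁ x 0 = 0)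
    (hic₂ : ∀ x ∈ Set.Icc (0 : ℝ) 1, c₂ x 0 = 0) :
    (∀ t ∈ Set.Icc 0 T,
      (∫ x in (-l)..0, (c x t) ^ 2) + (∫ x in (0 : ℝ)..1, (c₁ x t) ^ 2) +
          (∫ x in (0 : ℝ)..1, (c₂ x t) ^ 2) ≤
        (l / (2 * (min φ (1 - φ) / 2))) *
          Real.exp ((Da * (K + 1) / (2 * K * (min φ (1 - φ) / 2))) * t)) ∧
    δ * (∫ t in (0 : ℝ)..T, ∫ x in (-l)..0, (cx x t) ^ 2) +
        (∫ t in (0 : ℝ)..T, ∫ x in (0 : ℝ)..1, (c₁x x t) ^ 2) +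
        (Pe / 2) * (∫ t in (0 : ℝ)..T, ((c₁ 0 t) ^ 2 + (c₁ 1 t) ^ 2)) ≤
      (l / 2) * Real.exp ((Da * (K + 1) / (2 * K * (min φ (1 - φ) / 2))) * T) := by
  classical
  obtain ⟨hφ0, hφ1⟩ := hφ
  have hl0 : (-l) ≤ (0:ℝ) := by linarith
  have h01 : (0:ℝ) ≤ 1 := zero_le_one
  have hT0 : (0:ℝ) ≤ T := hT.le
  set γ : ℝ := min φ (1 - φ) / 2 with hγdef
  set M : ℝ := Da * (K + 1) / (2 * K * γ) with hMdef
  have hγpos : 0 < γ := by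
    have h1 : 0 < min φ (1 - φ) := lt_min hφ0 (by linarith)
    rw [hγdef]; linarith
  have hγφ : γ ≤ φ / 2 := by
    have := min_le_left φ (1 - φ); rw [hγdef]; linarith
  have hγφ' : γ ≤ (1 - φ) / 2 := by
    have := min_le_right φ (1 - φ); rw [hγdef]; linarith
  have hMpos : 0 < M := by rw [hMdef]; positivity
  have hMγ : M * γ = Da * (K + 1) / (2 * K) := by
    rw [hMdef]; field_simp
  -- shorthand for the two boxes
  -- energy pieces
  set Ic : ℝ → ℝ := fun t => ∫ x in (-l)..0, (c x t) ^ 2 with hIcdef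
  set I1 : ℝ → ℝ := fun t => ∫ x in (0:ℝ)..1, (c₁ x t) ^ 2 with hI1def
  set I2 : ℝ → ℝ := fun t => ∫ x in (0:ℝ)..1, (c₂ x t) ^ 2 with hI2def
  set Gc : ℝ → ℝ := fun s => ∫ x in (-l)..0, 2 * (c x s * ct x s) with hGcdef
  set G1 : ℝ → ℝ := fun s => ∫ x in (0:ℝ)..1, 2 * (c₁ x s * c₁t x s) with hG1def
  set G2 : ℝ → ℝ := fun s => ∫ x in (0:ℝ)..1, 2 * (c₂ x s * c₂t x s) with hG2def
  set F : ℝ → ℝ := fun t => (1/2) * Ic t + (φ/2) * I1 t + ((1-φ)/2) * I2 t with hFdef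
  set g : ℝ → ℝ := fun s => (1/2) * Gc s + (φ/2) * G1 s + ((1-φ)/2) * G2 s with hgdef
  set D : ℝ → ℝ := fun t => δ * (∫ x in (-l)..0, (cx x t) ^ 2)
      + (∫ x in (0:ℝ)..1, (c₁x x t) ^ 2)
      + (Pe/2) * ((c₁ 0 t) ^ 2 + (c₁ 1 t) ^ 2) with hDdef
  -- nonnegativity of energy pieces
  have hIcnn : ∀ t, 0 ≤ Ic t := fun t =>
    intervalIntegral.integral_nonneg hl0 (fun x _ => sq_nonneg _)
  have hI1nn : ∀ t, 0 ≤ I1 t := fun t =>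
    intervalIntegral.integral_nonneg h01 (fun x _ => sq_nonneg _)
  have hI2nn : ∀ t, 0 ≤ I2 t := fun t =>
    intervalIntegral.integral_nonneg h01 (fun x _ => sq_nonneg _)
  have hFnn : ∀ t, 0 ≤ F t := by
    intro t; rw [hFdef]; dsimp only
    have := hIcnn t; have := hI1nn t; have := hI2nn t
    nlinarith
  -- initial values
  have hIc0 : Ic 0 = l := by
    rw [hIcdef]; dsimp only
    rw [show (∫ x in (-l)..0, (c x 0) ^ 2) = ∫ x in (-l)..0, (1:ℝ) from
      intervalIntegral.integral_congr (fun x hx => by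
        rw [Set.uIcc_of_le hl0] at hx
        rw [hic x hx]; norm_num)]
    simp
  have hI10 : I1 0 = 0 := by
    rw [hI1def]; dsimp only
    rw [show (∫ x in (0:ℝ)..1, (c₁ x 0) ^ 2) = ∫ x in (0:ℝ)..1, (0:ℝ) from
      intervalIntegral.integral_congr (fun x hx => by
        rw [Set.uIcc_of_le h01] at hx
        rw [hic₁ x hx]; norm_num)]
    simp
  have hI20 : I2 0 = 0 := by
    rw [hI2def]; dsimp only
    rw [show (∫ x in (0:ℝ)..1, (c₂ x 0) ^ 2) = ∫ x in (0:ℝ)..1, (0:ℝ) from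
      intervalIntegral.integral_congr (fun x hx => by
        rw [Set.uIcc_of_le h01] at hx
        rw [hic₂ x hx]; norm_num)]
    simp
  have hF0 : F 0 = l / 2 := by
    rw [hFdef]; dsimp only; rw [hIc0, hI10, hI20]; ring
  -- continuity of parametric integrals
  have hIc_cont : ContinuousOn Ic (Set.Icc 0 T) :=
    DrugAux.contOn_param (f := fun x t => (c x t) ^ 2) hl0 (hsol.cont_c.pow 2)
  have hI1_cont : ContinuousOn I1 (Set.Icc 0 T) :=
    DrugAux.contOn_param (f := fun x t => (c₁ x t) ^ 2) h01 (hsol.cont_c₁.pow 2)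
  have hI2_cont : ContinuousOn I2 (Set.Icc 0 T) :=
    DrugAux.contOn_param (f := fun x t => (c₂ x t) ^ 2) h01 (hsol.cont_c₂.pow 2)
  have hGc_cont : ContinuousOn Gc (Set.Icc 0 T) :=
    DrugAux.contOn_param (f := fun x t => 2 * (c x t * ct x t)) hl0
      (continuousOn_const.mul (hsol.cont_c.mul hsol.cont_ct))
  have hG1_cont : ContinuousOn G1 (Set.Icc 0 T) :=
    DrugAux.contOn_param (f := fun x t => 2 * (c₁ x t * c₁t x t)) h01
      (continuousOn_const.mul (hsol.cont_c₁.mul hsol.cont_c₁t))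
  have hG2_cont : ContinuousOn G2 (Set.Icc 0 T) :=
    DrugAux.contOn_param (f := fun x t => 2 * (c₂ x t * c₂t x t)) h01
      (continuousOn_const.mul (hsol.cont_c₂.mul hsol.cont_c₂t))
  have hF_cont : ContinuousOn F (Set.Icc 0 T) := by
    rw [hFdef]
    exact ((continuousOn_const.mul hIc_cont).add (continuousOn_const.mul hI1_cont)).add
      (continuousOn_const.mul hI2_cont)
  have hg_cont : ContinuousOn g (Set.Icc 0 T) := by
    rw [hgdef]
    exact ((continuousOn_const.mul hGc_cont).add (continuousOn_const.mul hG1_cont)).add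
      (continuousOn_const.mul hG2_cont)
  have hD_cont : ContinuousOn D (Set.Icc 0 T) := by
    rw [hDdef]
    have h1 : ContinuousOn (fun t => ∫ x in (-l)..0, (cx x t) ^ 2) (Set.Icc 0 T) :=
      DrugAux.contOn_param (f := fun x t => (cx x t) ^ 2) hl0 (hsol.cont_cx.pow 2)
    have h2 : ContinuousOn (fun t => ∫ x in (0:ℝ)..1, (c₁x x t) ^ 2) (Set.Icc 0 T) :=
      DrugAux.contOn_param (f := fun x t => (c₁x x t) ^ 2) h01 (hsol.cont_c₁x.pow 2)
    have h3 : ContinuousOn (fun t => c₁ 0 t) (Set.Icc 0 T) :=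
      DrugAux.contOn_sliceT (f := fun x t => c₁ x t) hsol.cont_c₁ ⟨le_refl (0:ℝ), zero_le_one⟩
    have h4 : ContinuousOn (fun t => c₁ 1 t) (Set.Icc 0 T) :=
      DrugAux.contOn_sliceT (f := fun x t => c₁ x t) hsol.cont_c₁ ⟨zero_le_one, le_refl (1:ℝ)⟩
    exact ((continuousOn_const.mul h1).add h2).add
      (continuousOn_const.mul ((h3.pow 2).add (h4.pow 2)))
  -- representation of the energies
  have hRc : ∀ t ∈ Set.Icc (0:ℝ) T, Ic t = Ic 0 + ∫ s in (0:ℝ)..t, Gc s := fun t ht =>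
    DrugAux.rep hl0 hsol.cont_c hsol.cont_ct hsol.hasDeriv_ct ht
  have hR1 : ∀ t ∈ Set.Icc (0:ℝ) T, I1 t = I1 0 + ∫ s in (0:ℝ)..t, G1 s := fun t ht =>
    DrugAux.rep h01 hsol.cont_c₁ hsol.cont_c₁t hsol.hasDeriv_c₁t ht
  have hR2 : ∀ t ∈ Set.Icc (0:ℝ) T, I2 t = I2 0 + ∫ s in (0:ℝ)..t, G2 s := fun t ht =>
    DrugAux.rep h01 hsol.cont_c₂ hsol.cont_c₂t hsol.hasDeriv_c₂t ht
  have hFrep : ∀ t ∈ Set.Icc (0:ℝ) T, F t = F 0 + ∫ s in (0:ℝ)..t, g s := by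
    intro t ht
    have hsub : Set.Icc (0:ℝ) t ⊆ Set.Icc (0:ℝ) T := Set.Icc_subset_Icc le_rfl ht.2
    have iGc : IntervalIntegrable Gc volume 0 t := by
      apply ContinuousOn.intervalIntegrable
      rw [Set.uIcc_of_le ht.1]; exact hGc_cont.mono hsub
    have iG1 : IntervalIntegrable G1 volume 0 t := by
      apply ContinuousOn.intervalIntegrable
      rw [Set.uIcc_of_le ht.1]; exact hG1_cont.mono hsub
    have iG2 : IntervalIntegrable G2 volume 0 t := by
      apply ContinuousOn.intervalIntegrable
      rw [Set.uIcc_of_le ht.1]; exact hG2_cont.mono hsub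
    have e1 : (∫ s in (0:ℝ)..t, g s)
        = (1/2) * (∫ s in (0:ℝ)..t, Gc s) + (φ/2) * (∫ s in (0:ℝ)..t, G1 s)
          + ((1-φ)/2) * (∫ s in (0:ℝ)..t, G2 s) := by
      simp only [hgdef]
      rw [intervalIntegral.integral_add ((iGc.const_mul _).add (iG1.const_mul _))
            (iG2.const_mul _),
          intervalIntegral.integral_add (iGc.const_mul _) (iG1.const_mul _),
          intervalIntegral.integral_const_mul, intervalIntegral.integral_const_mul,
          intervalIntegral.integral_const_mul]
    rw [e1, hFdef]; dsimp only
    rw [hRc t ht, hR1 t ht, hR2 t ht]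
    ring
  -- THE KEY POINTWISE ESTIMATE
  have hkey : ∀ t ∈ Set.Ioc (0:ℝ) T, g t + D t ≤ M * F t := by
    intro t ht
    have htI : t ∈ Set.Icc (0:ℝ) T := ⟨ht.1.le, ht.2⟩
    have h1φ : (1:ℝ) - φ ≠ 0 := by linarith
    have hφne : φ ≠ 0 := ne_of_gt hφ0
    -- slice continuity at time t
    have cs_c : ContinuousOn (fun x => c x t) (Set.Icc (-l) 0) :=
      DrugAux.contOn_sliceX (f := fun x t => c x t) hsol.cont_c htI
    have cs_ct : ContinuousOn (fun x => ct x t) (Set.Icc (-l) 0) :=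
      DrugAux.contOn_sliceX (f := fun x t => ct x t) hsol.cont_ct htI
    have cs_cx : ContinuousOn (fun x => cx x t) (Set.Icc (-l) 0) :=
      DrugAux.contOn_sliceX (f := fun x t => cx x t) hsol.cont_cx htI
    have cs_cxx : ContinuousOn (fun x => cxx x t) (Set.Icc (-l) 0) :=
      DrugAux.contOn_sliceX (f := fun x t => cxx x t) hsol.cont_cxx htI
    have cs_c1 : ContinuousOn (fun x => c₁ x t) (Set.Icc (0:ℝ) 1) :=
      DrugAux.contOn_sliceX (f := fun x t => c₁ x t) hsol.cont_c₁ htI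
    have cs_c1t : ContinuousOn (fun x => c₁t x t) (Set.Icc (0:ℝ) 1) :=
      DrugAux.contOn_sliceX (f := fun x t => c₁t x t) hsol.cont_c₁t htI
    have cs_c1x : ContinuousOn (fun x => c₁x x t) (Set.Icc (0:ℝ) 1) :=
      DrugAux.contOn_sliceX (f := fun x t => c₁x x t) hsol.cont_c₁x htI
    have cs_c1xx : ContinuousOn (fun x => c₁xx x t) (Set.Icc (0:ℝ) 1) :=
      DrugAux.contOn_sliceX (f := fun x t => c₁xx x t) hsol.cont_c₁xx htI
    have cs_c2 : ContinuousOn (fun x => c₂ x t) (Set.Icc (0:ℝ) 1) :=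
      DrugAux.contOn_sliceX (f := fun x t => c₂ x t) hsol.cont_c₂ htI
    have cs_c2t : ContinuousOn (fun x => c₂t x t) (Set.Icc (0:ℝ) 1) :=
      DrugAux.contOn_sliceX (f := fun x t => c₂t x t) hsol.cont_c₂t htI
    have intL : ∀ {f : ℝ → ℝ}, ContinuousOn f (Set.Icc (-l) 0) →
        IntervalIntegrable f volume (-l) 0 := by
      intro f hf
      apply ContinuousOn.intervalIntegrable
      rwa [Set.uIcc_of_le hl0]
    have intR : ∀ {f : ℝ → ℝ}, ContinuousOn f (Set.Icc (0:ℝ) 1) →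
        IntervalIntegrable f volume 0 1 := by
      intro f hf
      apply ContinuousOn.intervalIntegrable
      rwa [Set.uIcc_of_le h01]
    -- STEP A : the c-equation
    have hbc_lum : cx (-l) t = 0 := hsol.bc_lumen t ht
    have hibp_c : ∫ x in (-l)..0, ((cx x t) ^ 2 + c x t * cxx x t)
        = c 0 t * cx 0 t - c (-l) t * cx (-l) t :=
      DrugAux.ibp hl0 cs_c cs_cx cs_cxx (fun x hx => hsol.hasDeriv_cx x hx t htI)
        (fun x hx => hsol.hasDeriv_cxx x hx t htI)
    have hsplit_c : (∫ x in (-l)..0, ((cx x t) ^ 2 + c x t * cxx x t))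
        = (∫ x in (-l)..0, (cx x t) ^ 2) + ∫ x in (-l)..0, c x t * cxx x t :=
      intervalIntegral.integral_add (intL (cs_cx.pow 2)) (intL (cs_c.mul cs_cxx))
    have hccxx : (∫ x in (-l)..0, c x t * cxx x t)
        = c 0 t * cx 0 t - (∫ x in (-l)..0, (cx x t) ^ 2) := by
      rw [hbc_lum] at hibp_c
      rw [hsplit_c] at hibp_c
      linarith
    have hGct : Gc t = 2 * δ * (c 0 t * cx 0 t) - 2 * δ * (∫ x in (-l)..0, (cx x t) ^ 2) := by
      have hae : ∀ᵐ x ∂(volume : Measure ℝ), x ∈ Set.uIoc (-l) 0 →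
          2 * (c x t * ct x t) = (2 * δ) * (c x t * cxx x t) := by
        filter_upwards [measure_eq_zero_iff_ae_notMem.mp (measure_singleton (0:ℝ))] with x hx0 hxI
        rw [Set.uIoc_of_le hl0] at hxI
        have hxo : x ∈ Set.Ioo (-l) 0 :=
          ⟨hxI.1, lt_of_le_of_ne hxI.2 (fun h => hx0 (by simp [h]))⟩
        rw [hsol.pde_c x hxo t ht]; ring
      rw [hGcdef]; dsimp only
      rw [intervalIntegral.integral_congr_ae hae, intervalIntegral.integral_const_mul, hccxx]
      ring
    -- STEP C : the c₂-equation
    have hG2t : G2 t = (2 / (1 - φ)) * (Da * (∫ x in (0:ℝ)..1, c₁ x t * c₂ x t)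
        - (Da / K) * I2 t) := by
      have hcongr : ∀ x ∈ Set.uIcc (0:ℝ) 1, 2 * (c₂ x t * c₂t x t)
          = (2 / (1 - φ)) * (Da * (c₁ x t * c₂ x t) - (Da / K) * (c₂ x t) ^ 2) := by
        intro x hx
        rw [Set.uIcc_of_le h01] at hx
        have h := hsol.ode_c₂ x hx t ht
        have hc2t : c₂t x t = (Da * c₁ x t - (Da / K) * c₂ x t) / (1 - φ) := by
          rw [eq_div_iff h1φ]
          linarith
        rw [hc2t]
        field_simp
      rw [hG2def]; dsimp only
      rw [intervalIntegral.integral_congr hcongr, intervalIntegral.integral_const_mul,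
        intervalIntegral.integral_sub ((intR (cs_c1.fun_mul cs_c2)).const_mul _)
          ((intR (cs_c2.fun_pow 2)).const_mul _),
        intervalIntegral.integral_const_mul, intervalIntegral.integral_const_mul]
    -- STEP B : the c₁-equation
    have hbca : c₁x 1 t = 0 := hsol.bc_adventitia t ht
    have hibp_1 : ∫ x in (0:ℝ)..1, ((c₁x x t) ^ 2 + c₁ x t * c₁xx x t)
        = c₁ 1 t * c₁x 1 t - c₁ 0 t * c₁x 0 t :=
      DrugAux.ibp h01 cs_c1 cs_c1x cs_c1xx (fun x hx => hsol.hasDeriv_c₁x x hx t htI)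
        (fun x hx => hsol.hasDeriv_c₁xx x hx t htI)
    have hsplit_1 : (∫ x in (0:ℝ)..1, ((c₁x x t) ^ 2 + c₁ x t * c₁xx x t))
        = (∫ x in (0:ℝ)..1, (c₁x x t) ^ 2) + ∫ x in (0:ℝ)..1, c₁ x t * c₁xx x t :=
      intervalIntegral.integral_add (intR (cs_c1x.pow 2)) (intR (cs_c1.mul cs_c1xx))
    have hc1c1xx : (∫ x in (0:ℝ)..1, c₁ x t * c₁xx x t)
        = -(c₁ 0 t * c₁x 0 t) - (∫ x in (0:ℝ)..1, (c₁x x t) ^ 2) := by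
      rw [hbca] at hibp_1
      rw [hsplit_1] at hibp_1
      linarith
    have hc1c1x : (∫ x in (0:ℝ)..1, c₁ x t * c₁x x t)
        = (c₁ 1 t) ^ 2 / 2 - (c₁ 0 t) ^ 2 / 2 :=
      DrugAux.ftc_sq h01 cs_c1 cs_c1x (fun x hx => hsol.hasDeriv_c₁x x hx t htI)
    have hG1t : G1 t = (2 / φ) * ((∫ x in (0:ℝ)..1, c₁ x t * c₁xx x t)
        - Pe * (∫ x in (0:ℝ)..1, c₁ x t * c₁x x t) - Da * I1 t
        + (Da / K) * (∫ x in (0:ℝ)..1, c₁ x t * c₂ x t)) := by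
      have hae : ∀ᵐ x ∂(volume : Measure ℝ), x ∈ Set.uIoc (0:ℝ) 1 →
          2 * (c₁ x t * c₁t x t) = (2 / φ) * (c₁ x t * c₁xx x t
            - Pe * (c₁ x t * c₁x x t) - Da * (c₁ x t) ^ 2
            + (Da / K) * (c₁ x t * c₂ x t)) := by
        filter_upwards [measure_eq_zero_iff_ae_notMem.mp (measure_singleton (1:ℝ))] with x hx0 hxI
        rw [Set.uIoc_of_le h01] at hxI
        have hxo : x ∈ Set.Ioo (0:ℝ) 1 :=
          ⟨hxI.1, lt_of_le_of_ne hxI.2 (fun h => hx0 (by simp [h]))⟩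
        have h := hsol.pde_c₁ x hxo t ht
        have hc1t : c₁t x t = (c₁xx x t - Pe * c₁x x t - Da * c₁ x t
            + (Da / K) * c₂ x t) / φ := by
          rw [eq_div_iff hφne]
          linarith
        rw [hc1t]
        field_simp
      rw [hG1def]; dsimp only
      rw [intervalIntegral.integral_congr_ae hae, intervalIntegral.integral_const_mul]
      congr 1
      rw [intervalIntegral.integral_add
            (((intR (cs_c1.fun_mul cs_c1xx)).sub ((intR (cs_c1.fun_mul cs_c1x)).const_mul _)).sub
              ((intR (cs_c1.fun_pow 2)).const_mul _))
            ((intR (cs_c1.fun_mul cs_c2)).const_mul _),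
          intervalIntegral.integral_sub
            ((intR (cs_c1.fun_mul cs_c1xx)).sub ((intR (cs_c1.fun_mul cs_c1x)).const_mul _))
            ((intR (cs_c1.fun_pow 2)).const_mul _),
          intervalIntegral.integral_sub (intR (cs_c1.fun_mul cs_c1xx))
            ((intR (cs_c1.fun_mul cs_c1x)).const_mul _),
          intervalIntegral.integral_const_mul, intervalIntegral.integral_const_mul,
          intervalIntegral.integral_const_mul]
    -- boundary relations
    have hX : cx 0 t = Pt * (c₁ 0 t - c 0 t) := by
      have := hsol.bc_interface_c t ht; linarith [this]
    have hY : c₁x 0 t = Pe * c₁ 0 t + δ * cx 0 t := by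
      have := hsol.bc_interface_c₁ t ht; linarith [this]
    -- Cauchy-Schwarz bound
    have hJ12 : (∫ x in (0:ℝ)..1, c₁ x t * c₂ x t) ≤ I1 t / 2 + I2 t / 2 := by
      have hmono : (∫ x in (0:ℝ)..1, c₁ x t * c₂ x t)
          ≤ ∫ x in (0:ℝ)..1, ((c₁ x t) ^ 2 / 2 + (c₂ x t) ^ 2 / 2) := by
        apply intervalIntegral.integral_mono_on h01 (intR (cs_c1.fun_mul cs_c2))
          (intR (((cs_c1.fun_pow 2).div_const 2).fun_add ((cs_c2.fun_pow 2).div_const 2)))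
        intro x hx
        nlinarith [sq_nonneg (c₁ x t - c₂ x t)]
      rw [intervalIntegral.integral_add ((intR (cs_c1.fun_pow 2)).div_const 2)
        ((intR (cs_c2.fun_pow 2)).div_const 2), intervalIntegral.integral_div,
        intervalIntegral.integral_div] at hmono
      exact hmono
    -- halves
    have e1 : (1/2) * Gc t = δ * (c 0 t * cx 0 t) - δ * (∫ x in (-l)..0, (cx x t) ^ 2) := by
      rw [hGct]; ring
    have e2 : (φ/2) * G1 t = (∫ x in (0:ℝ)..1, c₁ x t * c₁xx x t)
        - Pe * (∫ x in (0:ℝ)..1, c₁ x t * c₁x x t) - Da * I1 t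
        + (Da / K) * (∫ x in (0:ℝ)..1, c₁ x t * c₂ x t) := by
      rw [hG1t]; field_simp
    have e3 : ((1-φ)/2) * G2 t = Da * (∫ x in (0:ℝ)..1, c₁ x t * c₂ x t)
        - (Da / K) * I2 t := by
      rw [hG2t]; field_simp
    -- assemble
    have hMγ2 : Da * (K + 1) / (2 * K) = M * γ := hMγ.symm
    have hb1 : (Da * (K + 1) / (2 * K)) * I1 t ≤ M * (φ / 2) * I1 t := by
      rw [hMγ2]
      apply mul_le_mul_of_nonneg_right _ (hI1nn t)
      exact mul_le_mul_of_nonneg_left hγφ hMpos.le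
    have hb2 : (Da * (K + 1) / (2 * K)) * I2 t ≤ M * ((1 - φ) / 2) * I2 t := by
      rw [hMγ2]
      apply mul_le_mul_of_nonneg_right _ (hI2nn t)
      exact mul_le_mul_of_nonneg_left hγφ' hMpos.le
    have hb3 : (Da + Da / K) * (∫ x in (0:ℝ)..1, c₁ x t * c₂ x t)
        ≤ (Da * (K + 1) / (2 * K)) * I1 t + (Da * (K + 1) / (2 * K)) * I2 t := by
      have hc : (0:ℝ) < Da + Da / K := by positivity
      have := mul_le_mul_of_nonneg_left hJ12 hc.le
      calc (Da + Da / K) * (∫ x in (0:ℝ)..1, c₁ x t * c₂ x t)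
          ≤ (Da + Da / K) * (I1 t / 2 + I2 t / 2) := this
        _ = (Da * (K + 1) / (2 * K)) * I1 t + (Da * (K + 1) / (2 * K)) * I2 t := by
            field_simp
    have hsq : (0:ℝ) ≤ δ * Pt * (c 0 t - c₁ 0 t) ^ 2 := by positivity
    have hJcx : (0:ℝ) ≤ ∫ x in (-l)..0, (cx x t) ^ 2 :=
      intervalIntegral.integral_nonneg hl0 (fun x _ => sq_nonneg _)
    have hJ1x : (0:ℝ) ≤ ∫ x in (0:ℝ)..1, (c₁x x t) ^ 2 :=
      intervalIntegral.integral_nonneg h01 (fun x _ => sq_nonneg _)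
    rw [hgdef, hDdef, hFdef]; dsimp only
    have hn1 : 0 ≤ Da * I1 t := mul_nonneg hDa.le (hI1nn t)
    have hn2 : 0 ≤ (Da / K) * I2 t := mul_nonneg (by positivity) (hI2nn t)
    have hn3 : 0 ≤ M * (1 / 2 * Ic t) := mul_nonneg hMpos.le (by linarith [hIcnn t])
    rw [e1, e2, e3, hc1c1xx, hc1c1x, hY, hX]
    linarith [hb1, hb2, hb3, hsq, hn1, hn2, hn3]
  -- extend the key estimate to t = 0 by continuity
  have hDnn : ∀ t ∈ Set.Icc (0:ℝ) T, 0 ≤ D t := by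
    intro t ht
    rw [hDdef]; dsimp only
    have h1 : 0 ≤ ∫ x in (-l)..0, (cx x t) ^ 2 :=
      intervalIntegral.integral_nonneg hl0 (fun _ _ => sq_nonneg _)
    have h2 : 0 ≤ ∫ x in (0:ℝ)..1, (c₁x x t) ^ 2 :=
      intervalIntegral.integral_nonneg h01 (fun _ _ => sq_nonneg _)
    have h3 : 0 ≤ (c₁ 0 t) ^ 2 + (c₁ 1 t) ^ 2 := by positivity
    nlinarith [mul_nonneg hδ.le h1, mul_nonneg (by linarith : (0:ℝ) ≤ Pe/2) h3]
  have hkey' : ∀ t ∈ Set.Icc (0:ℝ) T, g t + D t ≤ M * F t := by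
    intro t ht
    rcases eq_or_lt_of_le ht.1 with h0 | h0
    · rw [← h0]
      have hc : ContinuousWithinAt (fun u => M * F u - (g u + D u)) (Set.Icc 0 T) 0 :=
        ((continuousOn_const.mul hF_cont).sub (hg_cont.add hD_cont)) 0
          (Set.left_mem_Icc.mpr hT0)
      have hΦ : ContinuousWithinAt (fun u => M * F u - (g u + D u)) (Set.Ioc 0 T) 0 :=
        hc.mono Set.Ioc_subset_Icc_self
      have hne : (nhdsWithin (0:ℝ) (Set.Ioc 0 T)).NeBot := by
        apply mem_closure_iff_nhdsWithin_neBot.mp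
        rw [closure_Ioc hT.ne]
        exact Set.left_mem_Icc.mpr hT0
      have hge : (0:ℝ) ≤ (fun u => M * F u - (g u + D u)) 0 := by
        apply ge_of_tendsto hΦ
        filter_upwards [self_mem_nhdsWithin] with u hu
        show (0:ℝ) ≤ M * F u - (g u + D u)
        linarith [hkey u hu]
      simp only at hge
      linarith
    · exact hkey t ⟨h0, ht.2⟩
  -- Gronwall
  have hFbound : ∀ t ∈ Set.Icc (0:ℝ) T, F t ≤ (l/2) * Real.exp (M * t) := by
    set H : ℝ → ℝ := fun u => Real.exp (-(M * u)) * F u with hHdef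
    have hH_cont : ContinuousOn H (Set.Icc 0 T) := by
      rw [hHdef]
      exact ((Real.continuous_exp.comp
        ((continuous_const.mul continuous_id).neg)).continuousOn).mul hF_cont
    have hHd : ∀ u ∈ interior (Set.Icc (0:ℝ) T),
        HasDerivAt H (Real.exp (-(M*u)) * g u + (-M * Real.exp (-(M*u))) * F u) u := by
      intro u hu
      rw [interior_Icc] at hu
      have hmem : Set.Icc (0:ℝ) T ∈ nhds u := Icc_mem_nhds hu.1 hu.2
      have hgc : ContinuousAt g u := hg_cont.continuousAt hmem
      have hgi : IntervalIntegrable g volume 0 u := by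
        apply ContinuousOn.intervalIntegrable
        rw [Set.uIcc_of_le hu.1.le]
        exact hg_cont.mono (Set.Icc_subset_Icc le_rfl hu.2.le)
      have hmeas : StronglyMeasurableAtFilter g (nhds u) :=
        ⟨Set.Icc 0 T, hmem, hg_cont.aestronglyMeasurable measurableSet_Icc⟩
      have hPd : HasDerivAt (fun w => F 0 + ∫ s in (0:ℝ)..w, g s) (g u) u :=
        (intervalIntegral.integral_hasDerivAt_right hgi hmeas hgc).const_add (F 0)
      have hFev : F =ᶠ[nhds u] (fun w => F 0 + ∫ s in (0:ℝ)..w, g s) :=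
        Filter.eventuallyEq_of_mem hmem (fun w hw => hFrep w hw)
      have hFd : HasDerivAt F (g u) u := hPd.congr_of_eventuallyEq hFev
      have h1 : HasDerivAt (fun w : ℝ => -(M*w)) (-M) u := by
        simpa using ((hasDerivAt_id u).const_mul M).fun_neg
      have hed : HasDerivAt (fun w => Real.exp (-(M*w))) (-M * Real.exp (-(M*u))) u := by
        exact h1.exp.congr_deriv (by ring)
      have := hed.fun_mul hFd
      rw [hHdef]
      exact this.congr_deriv (by ring)
    have hanti : AntitoneOn H (Set.Icc 0 T) := by
      apply antitoneOn_of_deriv_nonpos (convex_Icc 0 T) hH_cont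
      · intro u hu
        exact ((hHd u hu).differentiableAt).differentiableWithinAt
      · intro u hu
        rw [(hHd u hu).deriv]
        have hu' := hu
        rw [interior_Icc] at hu'
        have hkk := hkey u ⟨hu'.1, hu'.2.le⟩
        have hDnnu := hDnn u ⟨hu'.1.le, hu'.2.le⟩
        have hgM : g u ≤ M * F u := by linarith
        have hexp : (0:ℝ) < Real.exp (-(M*u)) := Real.exp_pos _
        nlinarith [mul_le_mul_of_nonneg_left hgM hexp.le]
    intro t ht
    have h1 : H t ≤ H 0 := hanti (Set.left_mem_Icc.mpr hT0) ht ht.1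
    rw [hHdef] at h1; dsimp only at h1
    rw [hF0] at h1
    simp only [mul_zero, neg_zero, Real.exp_zero, one_mul] at h1
    have h2 := mul_le_mul_of_nonneg_left h1 (Real.exp_pos (M*t)).le
    rw [← mul_assoc, ← Real.exp_add] at h2
    simp only [add_neg_cancel, Real.exp_zero, one_mul] at h2
    linarith
  constructor
  · -- part 1
    intro t ht
    have hFb := hFbound t ht
    rw [hFdef] at hFb; dsimp only at hFb
    have hγhalf : γ ≤ 1/2 := by linarith
    have hlin : γ * (Ic t + I1 t + I2 t) ≤ (l/2) * Real.exp (M*t) := by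
      nlinarith [mul_nonneg (sub_nonneg.mpr hγhalf) (hIcnn t),
        mul_nonneg (sub_nonneg.mpr hγφ) (hI1nn t),
        mul_nonneg (sub_nonneg.mpr hγφ') (hI2nn t)]
    have hfin : Ic t + I1 t + I2 t ≤ l / (2 * γ) * Real.exp (M * t) := by
      rw [show l / (2 * γ) * Real.exp (M * t) = ((l/2) * Real.exp (M*t)) / γ by
        field_simp]
      rw [le_div_iff₀ hγpos]
      linarith
    exact hfin
  · -- part 2
    have hP1cont : ContinuousOn (fun t => ∫ x in (-l)..0, (cx x t) ^ 2) (Set.Icc 0 T) :=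
      DrugAux.contOn_param (f := fun x t => (cx x t) ^ 2) hl0 (hsol.cont_cx.pow 2)
    have hP2cont : ContinuousOn (fun t => ∫ x in (0:ℝ)..1, (c₁x x t) ^ 2) (Set.Icc 0 T) :=
      DrugAux.contOn_param (f := fun x t => (c₁x x t) ^ 2) h01 (hsol.cont_c₁x.pow 2)
    have hP3cont : ContinuousOn (fun t => (c₁ 0 t) ^ 2 + (c₁ 1 t) ^ 2) (Set.Icc 0 T) := by
      have h3 : ContinuousOn (fun t => c₁ 0 t) (Set.Icc 0 T) :=
        DrugAux.contOn_sliceT (f := fun x t => c₁ x t) hsol.cont_c₁ ⟨le_refl (0:ℝ), zero_le_one⟩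
      have h4 : ContinuousOn (fun t => c₁ 1 t) (Set.Icc 0 T) :=
        DrugAux.contOn_sliceT (f := fun x t => c₁ x t) hsol.cont_c₁ ⟨zero_le_one, le_refl (1:ℝ)⟩
      exact (h3.pow 2).add (h4.pow 2)
    have intT : ∀ {f : ℝ → ℝ}, ContinuousOn f (Set.Icc (0:ℝ) T) →
        IntervalIntegrable f volume 0 T := by
      intro f hf
      apply ContinuousOn.intervalIntegrable
      rwa [Set.uIcc_of_le hT0]
    have iP1 := intT hP1cont
    have iP2 := intT hP2cont
    have iP3 := intT hP3cont
    have iD := intT hD_cont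
    have iF := intT hF_cont
    have ig := intT hg_cont
    have hDsum : ∫ t in (0:ℝ)..T, D t
        = δ * (∫ t in (0:ℝ)..T, ∫ x in (-l)..0, (cx x t) ^ 2)
          + (∫ t in (0:ℝ)..T, ∫ x in (0:ℝ)..1, (c₁x x t) ^ 2)
          + (Pe/2) * (∫ t in (0:ℝ)..T, ((c₁ 0 t) ^ 2 + (c₁ 1 t) ^ 2)) := by
      simp only [hDdef]
      rw [intervalIntegral.integral_add ((iP1.const_mul δ).add iP2) (iP3.const_mul _),
          intervalIntegral.integral_add (iP1.const_mul δ) iP2,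
          intervalIntegral.integral_const_mul, intervalIntegral.integral_const_mul]
    have hgT : ∫ s in (0:ℝ)..T, g s = F T - F 0 := by
      have := hFrep T (Set.right_mem_Icc.mpr hT0)
      linarith
    have hmono : ∫ t in (0:ℝ)..T, D t ≤ ∫ t in (0:ℝ)..T, (M * F t - g t) := by
      apply intervalIntegral.integral_mono_on hT0 iD ((iF.const_mul M).sub ig)
      intro t ht
      linarith [hkey' t ht]
    have hsplit : ∫ t in (0:ℝ)..T, (M * F t - g t)
        = M * (∫ t in (0:ℝ)..T, F t) - ∫ t in (0:ℝ)..T, g t := by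
      rw [intervalIntegral.integral_sub (iF.const_mul M) ig,
        intervalIntegral.integral_const_mul]
    have hexpintT : ∫ t in (0:ℝ)..T, Real.exp (M*t) = (Real.exp (M*T) - 1)/M := by
      have hderiv : ∀ t ∈ Set.uIcc (0:ℝ) T,
          HasDerivAt (fun t => Real.exp (M*t)/M) (Real.exp (M*t)) t := by
        intro t _
        have h1 : HasDerivAt (fun w : ℝ => M*w) M t := by
          simpa using (hasDerivAt_id t).const_mul M
        have := ((Real.hasDerivAt_exp (M*t)).comp t h1).div_const M
        exact this.congr_deriv (by field_simp)
      have := intervalIntegral.integral_eq_sub_of_hasDerivAt hderiv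
        ((Real.continuous_exp.comp (continuous_const.mul continuous_id)).intervalIntegrable 0 T)
      rw [this]
      rw [mul_zero, Real.exp_zero]
      ring
    have hFle : ∫ t in (0:ℝ)..T, F t ≤ (l/2) * ((Real.exp (M*T) - 1)/M) := by
      have h1 : ∫ t in (0:ℝ)..T, F t ≤ ∫ t in (0:ℝ)..T, (l/2) * Real.exp (M*t) := by
        apply intervalIntegral.integral_mono_on hT0 iF
          (((Real.continuous_exp.comp (continuous_const.mul continuous_id)).intervalIntegrable
            0 T).const_mul _)
        exact hFbound
      rwa [intervalIntegral.integral_const_mul, hexpintT] at h1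
    have hcancel : M * ((l/2) * ((Real.exp (M*T) - 1)/M)) = (l/2) * (Real.exp (M*T) - 1) := by
      field_simp
    have hFTnn := hFnn T
    have hfinal : ∫ t in (0:ℝ)..T, D t ≤ (l/2) * Real.exp (M*T) := by
      have hMF : M * (∫ t in (0:ℝ)..T, F t) ≤ (l/2) * (Real.exp (M*T) - 1) := by
        calc M * (∫ t in (0:ℝ)..T, F t) ≤ M * ((l/2) * ((Real.exp (M*T) - 1)/M)) :=
              mul_le_mul_of_nonneg_left hFle hMpos.le
          _ = (l/2) * (Real.exp (M*T) - 1) := hcancel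
      rw [hsplit, hgT] at hmono
      have h9 : ∫ (t : ℝ) in (0:ℝ)..T, D t
          ≤ l / 2 * (Real.exp (M * T) - 1) - (F T - F 0) :=
        le_trans hmono (by linarith only [hMF])
      rw [hF0] at h9
      calc ∫ (t : ℝ) in (0:ℝ)..T, D t
          ≤ l / 2 * (Real.exp (M * T) - 1) - (F T - l / 2) := h9
        _ = l / 2 * Real.exp (M * T) - F T := by ring
        _ ≤ (l/2) * Real.exp (M*T) := sub_le_self _ hFTnn
    rw [hDsum] at hfinal
    exact hfinal
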